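/- Let n ≥ 1, let p be an integer with 1 ≤ p ≤ n, let A be an n×n real matrix, and let (D_p^k)_{k≥0} be the associated over-approximation sequence. Then for every k ≥ 0: D_p^k(i,i) = 0 for all i ∈ {1,…,n}, and Zone(D_p^k) is nonempty; that is, each D_p^k is a strongly definite matrix. -/

import Mathlib

/-- `MinMaxValue(F | p, n+1−p)`: the minimum over all pairs `(S₁, S₂)` of subsets of
`{1,…,n}` with `|S₁| = p` and `|S₂| = n+1−p` of `max_{(i,j) ∈ S₁×S₂} F i j`, where the
entries lie in `ℝ ∪ {−∞}` (modeled as `WithBot ℝ`). -/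
noncomputable def minMaxValue {n : ℕ} (p : ℕ) (F : Fin n → Fin n → WithBot ℝ) : WithBot ℝ :=
  sInf {v : WithBot ℝ | ∃ S₁ S₂ : Finset (Fin n), S₁.card = p ∧ S₂.card = n + 1 - p ∧
    v = (S₁ ×ˢ S₂).sup (fun q => F q.1 q.2)}

/-- The over-approximation sequence `(D_p^k)_{k ≥ 0}` associated with `A`: `D_p^0` is the
max-plus identity matrix and
`D_p^{k+1}(i,j) = MinMaxValue((l,m) ↦ A i l − A j m + D_p^k l m | p, n+1−p)`. -/
noncomputable def Dseq {n : ℕ} (A : Fin n → Fin n → ℝ) (p : ℕ) :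
    ℕ → Fin n → Fin n → WithBot ℝ
  | 0 => fun i j => if i = j then 0 else ⊥
  | (k + 1) => fun i j =>
      minMaxValue p (fun l m => ((A i l - A j m : ℝ) : WithBot ℝ) + Dseq A p k l m)

/-- The zone of a DBM `D` over `ℝ ∪ {−∞}`: all real vectors `x` with
`x i − x j ≥ D i j` for all `i, j`. -/
def zone {n : ℕ} (D : Fin n → Fin n → WithBot ℝ) : Set (Fin n → ℝ) :=
  {x | ∀ i j, D i j ≤ ((x i - x j : ℝ) : WithBot ℝ)}

/-- Order-statistic lemma: there is a threshold `y` (the `p`-th smallest value of `g`),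
a set of `p` indices where `g ≤ y` and a set of `n+1-p` indices where `g ≥ y`. -/
lemma order_stat {n p : ℕ} (hp1 : 1 ≤ p) (hpn : p ≤ n) (g : Fin n → ℝ) :
    ∃ (y : ℝ) (S₁ S₂ : Finset (Fin n)), S₁.card = p ∧ S₂.card = n + 1 - p ∧
      (∀ l ∈ S₁, g l ≤ y) ∧ (∀ m ∈ S₂, y ≤ g m) := by
  set σ := Tuple.sort g with hσ
  have mono : Monotone (g ∘ σ) := Tuple.monotone_sort g
  have hq : p - 1 < n := by omega
  set q : Fin n := ⟨p - 1, hq⟩ with hqdef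
  refine ⟨g (σ q), (Finset.Iic q).image σ, (Finset.Ici q).image σ, ?_, ?_, ?_, ?_⟩
  · rw [Finset.card_image_of_injective _ σ.injective, Fin.card_Iic]
    simp [hqdef]; omega
  · rw [Finset.card_image_of_injective _ σ.injective, Fin.card_Ici]
    simp [hqdef]; omega
  · intro l hl
    obtain ⟨u, hu, rfl⟩ := Finset.mem_image.mp hl
    exact mono (Finset.mem_Iic.mp hu)
  · intro m hm
    obtain ⟨u, hu, rfl⟩ := Finset.mem_image.mp hm
    exact mono (Finset.mem_Ici.mp hu)

/-- Each `D_p^k` is strongly definite: its diagonal entries are `0` and its zone is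
nonempty. -/
theorem Dseq_strongly_definite (n p : ℕ) (hn : 1 ≤ n) (hp1 : 1 ≤ p) (hpn : p ≤ n)
    (A : Fin n → Fin n → ℝ) :
    ∀ k : ℕ, (∀ i, Dseq A p k i i = 0) ∧ (zone (Dseq A p k)).Nonempty := by
  intro k
  induction k with
  | zero =>
    refine ⟨fun i => by simp [Dseq], ⟨fun _ => 0, fun i j => ?_⟩⟩
    simp only [Dseq]
    split <;> simp
  | succ k ih =>
    obtain ⟨hdiag, x, hx⟩ := ih
    -- choose the p-th order statistic of `l ↦ A i l + x l` for each row `i`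
    choose y S₁ S₂ hc1 hc2 hub hlb using fun i => order_stat hp1 hpn (fun l => A i l + x l)
    -- the key upper bound
    have hub' : ∀ i j, Dseq A p (k + 1) i j ≤ ((y i - y j : ℝ) : WithBot ℝ) := by
      intro i j
      simp only [Dseq, minMaxValue]
      have hmem : ((S₁ i ×ˢ S₂ j).sup
          (fun q => ((A i q.1 - A j q.2 : ℝ) : WithBot ℝ) + Dseq A p k q.1 q.2)) ∈
          {v : WithBot ℝ | ∃ T₁ T₂ : Finset (Fin n), T₁.card = p ∧ T₂.card = n + 1 - p ∧
            v = (T₁ ×ˢ T₂).sup (fun q => ((A i q.1 - A j q.2 : ℝ) : WithBot ℝ) +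
              Dseq A p k q.1 q.2)} :=
        ⟨S₁ i, S₂ j, hc1 i, hc2 j, rfl⟩
      refine (csInf_le (OrderBot.bddBelow _) hmem).trans (Finset.sup_le ?_)
      rintro ⟨l, m⟩ hlm
      rw [Finset.mem_product] at hlm
      have h1 : ((A i l - A j m : ℝ) : WithBot ℝ) + Dseq A p k l m ≤
          ((A i l - A j m : ℝ) : WithBot ℝ) + ((x l - x m : ℝ) : WithBot ℝ) :=
        add_le_add (le_refl _) (hx l m)
      refine h1.trans ?_
      rw [← WithBot.coe_add, WithBot.coe_le_coe]
      have h2 := hub i l hlm.1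
      have h3 := hlb j m hlm.2
      linarith
    -- the key lower bound on the diagonal
    have hlb' : ∀ i, (0 : WithBot ℝ) ≤ Dseq A p (k + 1) i i := by
      intro i
      simp only [Dseq, minMaxValue]
      refine le_csInf ⟨_, ⟨S₁ i, S₂ i, hc1 i, hc2 i, rfl⟩⟩ ?_
      rintro v ⟨T₁, T₂, h1, h2, rfl⟩
      have hcard := Finset.card_union_add_card_inter T₁ T₂
      have hle := Finset.card_le_univ (T₁ ∪ T₂)
      simp only [Finset.card_univ, Fintype.card_fin] at hle
      have hint : (T₁ ∩ T₂).Nonempty := Finset.card_pos.mp (by omega)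
      obtain ⟨l, hl⟩ := hint
      rw [Finset.mem_inter] at hl
      have hmem : ((l, l) : Fin n × Fin n) ∈ T₁ ×ˢ T₂ := Finset.mem_product.mpr ⟨hl.1, hl.2⟩
      have hsup := Finset.le_sup (f := fun q : Fin n × Fin n =>
        ((A i q.1 - A i q.2 : ℝ) : WithBot ℝ) + Dseq A p k q.1 q.2) hmem
      simp only [hdiag l, sub_self, WithBot.coe_zero, add_zero] at hsup
      exact hsup
    refine ⟨fun i => le_antisymm ?_ (hlb' i), ⟨y, fun i j => hub' i j⟩⟩
    have := hub' i i
    simpa using this
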